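/- Let X be symmetric positive definite, u a vector, τ ∈ [0, 1/5), and M a symmetric matrix with (1−τ)X⁻¹ ⪯ M ⪯ (1+τ)X⁻¹. Define Z := M − (M u uᵀ M)/(1 + uᵀ M u). Then (1−5τ)(X + uuᵀ)⁻¹ ⪯ Z ⪯ (1+5τ)(X + uuᵀ)⁻¹. -/

import Mathlib

open Matrix

section RankOneAux

variable {n : ℕ}

private lemma quad_nonneg' {A : Matrix (Fin n) (Fin n) ℝ} (hA : A.PosSemidef) (x : Fin n → ℝ) :
    0 ≤ x ⬝ᵥ A.mulVec x := by simpa using hA.dotProduct_mulVec_nonneg x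

private lemma herm_smul' {A : Matrix (Fin n) (Fin n) ℝ} (hA : A.IsHermitian) (c : ℝ) :
    (c • A).IsHermitian := by
  unfold Matrix.IsHermitian
  rw [conjTranspose_smul, star_trivial, hA.eq]

private lemma psd_smul' {A : Matrix (Fin n) (Fin n) ℝ} (hA : A.PosSemidef) {c : ℝ} (hc : 0 ≤ c) :
    (c • A).PosSemidef := by
  refine .of_dotProduct_mulVec_nonneg (herm_smul' hA.1 c) fun x => ?_
  rw [smul_mulVec, dotProduct_smul]
  simpa using mul_nonneg hc (quad_nonneg' hA x)

private lemma pd_smul' {A : Matrix (Fin n) (Fin n) ℝ} (hA : A.PosDef) {c : ℝ} (hc : 0 < c) :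
    (c • A).PosDef := by
  refine .of_dotProduct_mulVec_pos (herm_smul' hA.1 c) fun x hx => ?_
  rw [smul_mulVec, dotProduct_smul]
  simpa using mul_pos hc (by simpa using hA.dotProduct_mulVec_pos hx)

private lemma herm_transpose_eq' {A : Matrix (Fin n) (Fin n) ℝ} (hA : A.IsHermitian) : Aᵀ = A := by
  ext i j
  simpa using congrFun (congrFun hA.eq i) j

private lemma dot_symm' {A : Matrix (Fin n) (Fin n) ℝ} (hA : A.IsHermitian) (a b : Fin n → ℝ) :
    a ⬝ᵥ A.mulVec b = b ⬝ᵥ A.mulVec a := by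
  rw [dotProduct_mulVec, dotProduct_comm, ← mulVec_transpose, herm_transpose_eq' hA]

private lemma matrix_cs' {A : Matrix (Fin n) (Fin n) ℝ} (hA : A.PosSemidef) (y z : Fin n → ℝ) :
    (y ⬝ᵥ A.mulVec z) ^ 2 ≤ (y ⬝ᵥ A.mulVec y) * (z ⬝ᵥ A.mulVec z) := by
  set p := y ⬝ᵥ A.mulVec y with hp
  set q := y ⬝ᵥ A.mulVec z with hq
  set r := z ⬝ᵥ A.mulVec z with hr
  have key : ∀ t : ℝ, 0 ≤ r * (t * t) + (2 * q) * t + p := by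
    intro t
    have h0 := quad_nonneg' hA (y + t • z)
    have hzy : z ⬝ᵥ A.mulVec y = q := (dot_symm' hA.1 z y).trans hq.symm
    simp only [mulVec_add, mulVec_smul, dotProduct_add, add_dotProduct,
      dotProduct_smul, smul_dotProduct, smul_eq_mul, hzy] at h0
    nlinarith [h0]
  have hd := discrim_le_zero key
  rw [discrim] at hd
  nlinarith [hd]

private lemma inv_antitone' {A B : Matrix (Fin n) (Fin n) ℝ} (hA : A.PosDef) (hB : B.PosDef)
    (h : (B - A).PosSemidef) : (A⁻¹ - B⁻¹).PosSemidef := by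
  refine .of_dotProduct_mulVec_nonneg (hA.1.inv.sub hB.1.inv) fun x => ?_
  rw [star_trivial, sub_mulVec, dotProduct_sub, sub_nonneg]
  set y := B⁻¹.mulVec x with hy
  set z := A⁻¹.mulVec x with hz
  have hBy : B.mulVec y = x := by
    rw [hy, mulVec_mulVec, B.mul_nonsing_inv hB.det_pos.ne'.isUnit, one_mulVec]
  have hAz : A.mulVec z = x := by
    rw [hz, mulVec_mulVec, A.mul_nonsing_inv hA.det_pos.ne'.isUnit, one_mulVec]
  have hq : y ⬝ᵥ A.mulVec z = y ⬝ᵥ x := by rw [hAz]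
  have ht0 : 0 ≤ y ⬝ᵥ x := by
    have := quad_nonneg' hB.inv.posSemidef x
    rwa [dotProduct_comm] at this
  have hr0 : 0 ≤ x ⬝ᵥ z := quad_nonneg' hA.inv.posSemidef x
  have hyx : y ⬝ᵥ B.mulVec y = y ⬝ᵥ x := by rw [hBy]
  have hyA : y ⬝ᵥ A.mulVec y ≤ y ⬝ᵥ x := by
    have hdiff := quad_nonneg' h y
    rw [sub_mulVec, dotProduct_sub, sub_nonneg, hyx] at hdiff
    exact hdiff
  have hzz : z ⬝ᵥ A.mulVec z = x ⬝ᵥ z := by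
    rw [dot_symm' hA.1 z, hAz, dotProduct_comm]
  have hcs := matrix_cs' hA.posSemidef y z
  rw [hq, hzz] at hcs
  have hyAnn : 0 ≤ y ⬝ᵥ A.mulVec y := quad_nonneg' hA.posSemidef y
  have hgoal : y ⬝ᵥ x ≤ x ⬝ᵥ z := by
    rcases eq_or_lt_of_le ht0 with h0 | h0
    · rw [← h0]; exact hr0
    · nlinarith [hcs, hyA, hr0]
  calc x ⬝ᵥ B⁻¹.mulVec x = y ⬝ᵥ x := by rw [← hy, dotProduct_comm]
    _ ≤ x ⬝ᵥ z := hgoal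
    _ = x ⬝ᵥ A⁻¹.mulVec x := by rw [hz]

private lemma vecMulVec_psd' (u : Fin n → ℝ) : (vecMulVec u u).PosSemidef := by
  refine .of_dotProduct_mulVec_nonneg ?_ fun x => ?_
  · unfold Matrix.IsHermitian
    ext i j
    simp [conjTranspose_apply, vecMulVec_apply, mul_comm]
  · have hmv : (vecMulVec u u).mulVec x = (u ⬝ᵥ x) • u := by
      ext i
      simp only [mulVec, vecMulVec_apply, dotProduct, Pi.smul_apply, smul_eq_mul,
        Finset.sum_mul, Finset.mul_sum]
      apply Finset.sum_congr rfl
      intro k _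
      ring
    rw [star_trivial, hmv, dotProduct_smul, smul_eq_mul, dotProduct_comm]
    exact mul_self_nonneg _

private lemma vecMulVec_sandwich' (u : Fin n → ℝ) (M : Matrix (Fin n) (Fin n) ℝ) :
    vecMulVec u u * (M * vecMulVec u u) = (u ⬝ᵥ M.mulVec u) • vecMulVec u u := by
  ext i j
  simp only [mul_apply, vecMulVec_apply, Matrix.smul_apply, smul_eq_mul, mulVec, dotProduct,
    Finset.mul_sum, Finset.sum_mul]
  apply Finset.sum_congr rfl
  intro k _
  apply Finset.sum_congr rfl
  intro l _
  ring

private lemma smul_inv_mat' {A : Matrix (Fin n) (Fin n) ℝ} (hA : IsUnit A.det) {c : ℝ}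
    (hc : c ≠ 0) : (c • A)⁻¹ = c⁻¹ • A⁻¹ := by
  apply Matrix.inv_eq_left_inv
  rw [smul_mul_smul_comm, inv_mul_cancel₀ hc, A.nonsing_inv_mul hA, one_smul]

end RankOneAux

/-- Rank-one update of an approximate inverse: if `(1−τ)X⁻¹ ⪯ M ⪯ (1+τ)X⁻¹` with
`τ ∈ [0, 1/5)`, then `Z := M − (M u uᵀ M)/(1 + uᵀ M u)` satisfies
`(1−5τ)(X + uuᵀ)⁻¹ ⪯ Z ⪯ (1+5τ)(X + uuᵀ)⁻¹`. -/
theorem rank_one_more_approx (n : ℕ) (X M : Matrix (Fin n) (Fin n) ℝ)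
    (hXsymm : X.IsSymm) (hX : X.PosDef) (hMsymm : M.IsSymm)
    (τ : ℝ) (hτ0 : 0 ≤ τ) (hτ : τ < 1 / 5) (u : Fin n → ℝ)
    (hlow : (M - (1 - τ) • X⁻¹).PosSemidef)
    (hup : ((1 + τ) • X⁻¹ - M).PosSemidef) :
    ((M - (1 / (1 + u ⬝ᵥ M.mulVec u)) • (M * vecMulVec u u * M)) -
        (1 - 5 * τ) • (X + vecMulVec u u)⁻¹).PosSemidef ∧
    ((1 + 5 * τ) • (X + vecMulVec u u)⁻¹ -
        (M - (1 / (1 + u ⬝ᵥ M.mulVec u)) • (M * vecMulVec u u * M))).PosSemidef := by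
  set U := vecMulVec u u with hUdef
  set s := u ⬝ᵥ M.mulVec u with hsdef
  set Y := X + U with hYdef
  set Z := M - (1 / (1 + s)) • (M * U * M) with hZdef
  have hU : U.PosSemidef := vecMulVec_psd' u
  have hXinv : X⁻¹.PosDef := hX.inv
  have hτ1 : (0:ℝ) < 1 - τ := by linarith
  have hτ2 : (0:ℝ) < 1 + τ := by linarith
  have hM : M.PosDef := by
    have h1 : ((1 - τ) • X⁻¹).PosDef := pd_smul' hXinv hτ1
    have h2 := h1.add_posSemidef hlow
    have h3 : (1 - τ) • X⁻¹ + (M - (1 - τ) • X⁻¹) = M := by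
      rw [add_comm, sub_add_cancel]
    rwa [h3] at h2
  have hs : 0 ≤ s := quad_nonneg' hM.posSemidef u
  have h1s : (0:ℝ) < 1 + s := by linarith
  have hMdet : IsUnit M.det := hM.det_pos.ne'.isUnit
  have hXdet : IsUnit X.det := hX.det_pos.ne'.isUnit
  have hYpd : Y.PosDef := hX.add_posSemidef hU
  have hYdet : IsUnit Y.det := hYpd.det_pos.ne'.isUnit
  set W := M⁻¹ + U with hWdef
  have hWpd : W.PosDef := hM.inv.add_posSemidef hU
  have hZW : Z * W = 1 := by
    have e1 : M * M⁻¹ = 1 := M.mul_nonsing_inv hMdet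
    have e2 : (M * U * M) * M⁻¹ = M * U := by
      rw [mul_assoc, e1, mul_one]
    have e3 : (M * U * M) * U = s • (M * U) := by
      rw [mul_assoc M U M, mul_assoc, mul_assoc U M U, vecMulVec_sandwich', mul_smul_comm,
        ← hsdef]
    rw [hZdef, hWdef, sub_mul, mul_add, mul_add, smul_mul_assoc, smul_mul_assoc, e1, e2, e3,
      smul_smul]
    have hc : (1:ℝ) / (1 + s) * s = 1 - 1 / (1 + s) := by field_simp; ring
    rw [hc]
    have hcomb : (1 / (1 + s)) • (M * U) + (1 - 1 / (1 + s)) • (M * U) = M * U := by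
      rw [← add_smul]
      ring_nf
      rw [one_smul]
    rw [hcomb, add_sub_cancel_right]
  have hZeq : W⁻¹ = Z := Matrix.inv_eq_left_inv hZW
  -- lower bound
  have lower : (Z - (1 - 5 * τ) • Y⁻¹).PosSemidef := by
    have i1 : ((1 - τ) • X⁻¹)⁻¹ = (1 - τ)⁻¹ • X := by
      rw [smul_inv_mat' hXinv.det_pos.ne'.isUnit hτ1.ne', X.nonsing_inv_nonsing_inv hXdet]
    have h3 := inv_antitone' (pd_smul' hXinv hτ1) hM hlow
    rw [i1] at h3
    have h5 : (1:ℝ) ≤ (1 - τ)⁻¹ := by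
      nlinarith [inv_pos.mpr hτ1, mul_inv_cancel₀ hτ1.ne']
    have h4 : (((1 - τ)⁻¹ - 1) • U).PosSemidef := psd_smul' hU (by linarith)
    have hb1 : ((1 - τ)⁻¹ • Y - W).PosSemidef := by
      have hsum := h3.add h4
      have heq : ((1 - τ)⁻¹ • X - M⁻¹) + ((1 - τ)⁻¹ - 1) • U = (1 - τ)⁻¹ • Y - W := by
        rw [hYdef, hWdef]
        ext i j
        simp only [Matrix.add_apply, Matrix.sub_apply, Matrix.smul_apply, smul_eq_mul]
        ring
      rwa [heq] at hsum
    have pY1 : ((1 - τ)⁻¹ • Y).PosDef := pd_smul' hYpd (inv_pos.mpr hτ1)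
    have h6 := inv_antitone' hWpd pY1 hb1
    have i2 : ((1 - τ)⁻¹ • Y)⁻¹ = (1 - τ) • Y⁻¹ := by
      rw [smul_inv_mat' hYdet (inv_ne_zero hτ1.ne'), inv_inv]
    rw [i2, hZeq] at h6
    have h7 : ((4 * τ) • Y⁻¹).PosSemidef := psd_smul' hYpd.inv.posSemidef (by linarith)
    have hsum := h6.add h7
    have heq : (Z - (1 - τ) • Y⁻¹) + (4 * τ) • Y⁻¹ = Z - (1 - 5 * τ) • Y⁻¹ := by
      ext i j
      simp only [Matrix.add_apply, Matrix.sub_apply, Matrix.smul_apply, smul_eq_mul]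
      ring
    rwa [heq] at hsum
  -- upper bound
  have upper : ((1 + 5 * τ) • Y⁻¹ - Z).PosSemidef := by
    have i1 : ((1 + τ) • X⁻¹)⁻¹ = (1 + τ)⁻¹ • X := by
      rw [smul_inv_mat' hXinv.det_pos.ne'.isUnit hτ2.ne', X.nonsing_inv_nonsing_inv hXdet]
    have h3 := inv_antitone' hM (pd_smul' hXinv hτ2) hup
    rw [i1] at h3
    have h5 : (1 + τ)⁻¹ ≤ (1:ℝ) := by
      nlinarith [inv_pos.mpr hτ2, mul_inv_cancel₀ hτ2.ne']
    have h4 : (((1:ℝ) - (1 + τ)⁻¹) • U).PosSemidef := psd_smul' hU (by linarith)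
    have hb1 : (W - (1 + τ)⁻¹ • Y).PosSemidef := by
      have hsum := h3.add h4
      have heq : (M⁻¹ - (1 + τ)⁻¹ • X) + ((1:ℝ) - (1 + τ)⁻¹) • U = W - (1 + τ)⁻¹ • Y := by
        rw [hYdef, hWdef]
        ext i j
        simp only [Matrix.add_apply, Matrix.sub_apply, Matrix.smul_apply, smul_eq_mul]
        ring
      rwa [heq] at hsum
    have pY1 : ((1 + τ)⁻¹ • Y).PosDef := pd_smul' hYpd (inv_pos.mpr hτ2)
    have h6 := inv_antitone' pY1 hWpd hb1
    have i2 : ((1 + τ)⁻¹ • Y)⁻¹ = (1 + τ) • Y⁻¹ := by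
      rw [smul_inv_mat' hYdet (inv_ne_zero hτ2.ne'), inv_inv]
    rw [i2, hZeq] at h6
    have h7 : ((4 * τ) • Y⁻¹).PosSemidef := psd_smul' hYpd.inv.posSemidef (by linarith)
    have hsum := h6.add h7
    have heq : ((1 + τ) • Y⁻¹ - Z) + (4 * τ) • Y⁻¹ = (1 + 5 * τ) • Y⁻¹ - Z := by
      ext i j
      simp only [Matrix.add_apply, Matrix.sub_apply, Matrix.smul_apply, smul_eq_mul]
      ring
    rwa [heq] at hsum
  exact ⟨lower, upper⟩
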